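/- In the randomized pool with heterogeneous degrees, fix a type u and suppose G(λ) < ∞ and ∑_{x∈ℕ^I} (∑_{S} x_{(u,S)}) Φ(x) λ^x < ∞. Then the mean number of type-u jobs is L_u = ∑_{ℓ=d_u}^{K} ρ_{u|ℓ} / (1 − ρ_{u|ℓ}), where L_u = ψ ∑_x (∑_S x_{(u,S)}) Φ(x) λ^x and ρ_{u|ℓ} = ( ρ p_u C(ℓ−1,d_u−1)/C(K−1,d_u−1) ) / ( 1 − ρ ∑_{v ≠ u} p_v C(ℓ−1,d_v−1)/C(K−1,d_v−1) ), with the convention C(a,b) = 0 when a < b. -/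

import Mathlib

open scoped BigOperators

/-- The balance function of balanced fairness: `Φ(0) = 1` and
`Φ(x) = (∑_{i : x_i > 0} Φ(x - e_i)) / M(⋃_{i : x_i > 0} 𝒦_i)`. -/
noncomputable def Phi {I K : Type} [Fintype I] [DecidableEq I] [DecidableEq K]
    (μ : K → ℝ) (Ka : I → Finset K) (x : I → ℕ) : ℝ :=
  if x = fun _ => 0 then 1
  else (∑ i ∈ (Finset.univ.filter (fun i => 0 < x i)).attach,
      Phi μ Ka (Function.update x i.1 (x i.1 - 1))) /
    (∑ k ∈ (Finset.univ.filter (fun i => 0 < x i)).biUnion Ka, μ k)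
termination_by ∑ i, x i
decreasing_by
  have hi := i.2
  simp only [Finset.mem_filter] at hi
  apply Finset.sum_lt_sum
  · intro j _
    rcases eq_or_ne j i.1 with rfl | h
    · simp [Function.update_self]
    · rw [Function.update_of_ne h]
  · exact ⟨i.1, Finset.mem_univ i.1, by simp [Function.update_self]; omega⟩

/-- The normalization series `G(λ) = ∑_{x∈ℕ^I} Φ(x) λ^x` (as a real tsum). -/
noncomputable def Gf {I K : Type} [Fintype I] [DecidableEq I] [DecidableEq K]
    (μ : K → ℝ) (Ka : I → Finset K) (lam : I → ℝ) : ℝ :=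
  ∑' x : I → ℕ, Phi μ Ka x * ∏ i, lam i ^ x i

/-- Classes of the randomized pool with heterogeneous degrees: a type `u` together with a
`d_u`-element subset of the `K` servers. -/
abbrev HetCls (K N : ℕ) (d : Fin N → ℕ) : Type :=
  Σ u : Fin N, {S : Finset (Fin K) // S.card = d u}

/-- Arrival rate `Kλp_u/C(K,d_u)` of a class of type `u`. -/
noncomputable def hetRate (K N : ℕ) (d : Fin N → ℕ) (p : Fin N → ℝ) (lam : ℝ)
    (c : HetCls K N d) : ℝ :=
  (K : ℝ) * lam * p c.1 / (K.choose (d c.1) : ℝ)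

/-- The load `ρ_{u|ℓ}` associated to type-`u` jobs in the system restricted to `ℓ`
servers (with the convention `C(a,b) = 0` for `a < b`). -/
noncomputable def hetTypeLoad (K N : ℕ) (d : Fin N → ℕ) (p : Fin N → ℝ) (lam μ : ℝ)
    (u : Fin N) (ℓ : ℕ) : ℝ :=
  (lam / μ * p u * ((ℓ - 1).choose (d u - 1) : ℝ) / ((K - 1).choose (d u - 1) : ℝ)) /
    (1 - lam / μ * ∑ v ∈ Finset.univ.erase u,
      p v * ((ℓ - 1).choose (d v - 1) : ℝ) / ((K - 1).choose (d v - 1) : ℝ))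


set_option linter.unusedSectionVars false

section Core
variable {I K : Type} [Fintype I] [DecidableEq I] [DecidableEq K]

lemma sum_update_lt (x : I → ℕ) (i : I) (hi : 0 < x i) :
    ∑ j, Function.update x i (x i - 1) j < ∑ j, x j := by
  apply Finset.sum_lt_sum
  · intro j _
    rcases eq_or_ne j i with rfl | h
    · simp [Function.update_self]
    · rw [Function.update_of_ne h]
  · exact ⟨i, Finset.mem_univ i, by simp [Function.update_self]; omega⟩

lemma Phi_zero (μ : K → ℝ) (Ka : I → Finset K) : Phi μ Ka (fun _ => 0) = 1 := by
  rw [Phi]; simp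

lemma Phi_of_ne (μ : K → ℝ) (Ka : I → Finset K) (x : I → ℕ) (hx : x ≠ fun _ => 0) :
    Phi μ Ka x = (∑ i ∈ (Finset.univ.filter (fun i => 0 < x i)).attach,
      Phi μ Ka (Function.update x i.1 (x i.1 - 1))) /
    (∑ k ∈ (Finset.univ.filter (fun i => 0 < x i)).biUnion Ka, μ k) := by
  rw [Phi, if_neg hx]

lemma Phi_nonneg (μ : K → ℝ) (Ka : I → Finset K) (hμ : ∀ k, 0 ≤ μ k) (x : I → ℕ) :
    0 ≤ Phi μ Ka x := by
  generalize hn : (∑ i, x i) = n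
  induction n using Nat.strong_induction_on generalizing x with
  | _ n ih =>
    rcases eq_or_ne x (fun _ => 0) with rfl | hx
    · rw [Phi_zero]; norm_num
    · rw [Phi_of_ne μ Ka x hx]
      apply div_nonneg
      · apply Finset.sum_nonneg
        intro i _
        have hi := i.2
        simp only [Finset.mem_filter] at hi
        exact ih _ (hn ▸ sum_update_lt x i.1 hi.2) _ rfl
      · exact Finset.sum_nonneg fun k _ => hμ k

lemma Phi_mul (μ : K → ℝ) (Ka : I → Finset K) (x : I → ℕ) (hx : x ≠ fun _ => 0)
    (hD : (∑ k ∈ (Finset.univ.filter (fun i => 0 < x i)).biUnion Ka, μ k) ≠ 0) :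
    (∑ k ∈ (Finset.univ.filter (fun i => 0 < x i)).biUnion Ka, μ k) * Phi μ Ka x
      = ∑ i ∈ Finset.univ.filter (fun i => 0 < x i),
          Phi μ Ka (Function.update x i (x i - 1)) := by
  rw [Phi_of_ne μ Ka x hx, mul_div_cancel₀ _ hD]
  exact Finset.sum_attach _ fun i => Phi μ Ka (Function.update x i (x i - 1))

end Core

section Equiv
variable {I K : Type} [Fintype I] [DecidableEq I] [DecidableEq K]

lemma filter_comp_eq (e : I ≃ I) (x : I → ℕ) :
    (Finset.univ.filter (fun i => 0 < x (e.symm i)))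
      = (Finset.univ.filter (fun i => 0 < x i)).map e.toEmbedding := by
  ext i
  simp only [Finset.mem_filter, Finset.mem_univ, true_and, Finset.mem_map,
    Equiv.coe_toEmbedding]
  constructor
  · intro h; exact ⟨e.symm i, h, by simp⟩
  · rintro ⟨a, ha, rfl⟩; simpa using ha

lemma biUnion_map_eq (e : I ≃ I) (π : K ≃ K) (Ka : I → Finset K)
    (hKa : ∀ i, Ka (e i) = (Ka i).image π) (S : Finset I) :
    (S.map e.toEmbedding).biUnion Ka = (S.biUnion Ka).image π := by
  ext k
  simp only [Finset.mem_biUnion, Finset.mem_map, Equiv.coe_toEmbedding,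
    Finset.mem_image]
  constructor
  · rintro ⟨i, ⟨j, hj, rfl⟩, hk⟩
    rw [hKa j, Finset.mem_image] at hk
    obtain ⟨m, hm, rfl⟩ := hk
    exact ⟨m, ⟨j, hj, hm⟩, rfl⟩
  · rintro ⟨m, ⟨j, hj, hm⟩, rfl⟩
    exact ⟨e j, ⟨j, hj, rfl⟩, by rw [hKa j]; exact Finset.mem_image_of_mem _ hm⟩

lemma update_comp_eq (e : I ≃ I) (x : I → ℕ) (j : I) :
    Function.update (fun i => x (e.symm i)) (e j) (x j - 1)
      = fun i => (Function.update x j (x j - 1)) (e.symm i) := by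
  funext k
  simp only [Function.update_apply]
  by_cases h : k = e j
  · subst h; simp
  · rw [if_neg h, if_neg (by intro hc; apply h; rw [← hc]; simp)]

lemma Phi_comp (c : ℝ) (Ka : I → Finset K) (e : I ≃ I) (π : K ≃ K)
    (hKa : ∀ i, Ka (e i) = (Ka i).image π) (x : I → ℕ) :
    Phi (fun _ => c) Ka (fun i => x (e.symm i)) = Phi (fun _ => c) Ka x := by
  generalize hn : (∑ i, x i) = n
  induction n using Nat.strong_induction_on generalizing x with
  | _ n ih =>
    rcases eq_or_ne x (fun _ => 0) with rfl | hx
    · simp [Phi_zero]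
    · have hx' : (fun i => x (e.symm i)) ≠ fun _ => 0 := by
        intro hc
        apply hx
        funext j
        have := congrFun hc (e j)
        simpa using this
      rw [Phi_of_ne _ _ _ hx', Phi_of_ne _ _ _ hx]
      congr 1
      · rw [Finset.sum_attach _ (fun i => Phi (fun _ => c) Ka
            (Function.update (fun i' => x (e.symm i')) i ((fun i' => x (e.symm i')) i - 1))),
          Finset.sum_attach _ (fun i => Phi (fun _ => c) Ka
            (Function.update x i (x i - 1)))]
        rw [filter_comp_eq e x, Finset.sum_map]
        apply Finset.sum_congr rfl
        intro j hj
        simp only [Finset.mem_filter] at hj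
        simp only [Equiv.coe_toEmbedding, Equiv.symm_apply_apply]
        rw [update_comp_eq e x j]
        exact ih _ (hn ▸ sum_update_lt x j hj.2) _ rfl
      · rw [filter_comp_eq e x, biUnion_map_eq e π Ka hKa]
        rw [Finset.sum_const, Finset.sum_const,
          Finset.card_image_of_injective _ π.injective]

end Equiv

section Master
variable {I K : Type} [Fintype I] [DecidableEq I] [DecidableEq K]

/-- product-form term -/
noncomputable def PPf (c : ℝ) (Ka : I → Finset K) (lam : I → ℝ) (x : I → ℕ) : ℝ :=
  Phi (fun _ => c) Ka x * ∏ i, lam i ^ x i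

/-- union of server sets of active classes -/
noncomputable def Uf (Ka : I → Finset K) (x : I → ℕ) : Finset K :=
  (Finset.univ.filter fun i => 0 < x i).biUnion Ka

/-- restricted weighted normalization sum -/
noncomputable def SLf (c : ℝ) (Ka : I → Finset K) (lam : I → ℝ)
    (V : (I → ℕ) → ℝ) (L : Finset K) : ℝ :=
  ∑' x : I → ℕ, if Uf Ka x ⊆ L then V x * PPf c Ka lam x else 0

variable (c : ℝ) (Ka : I → Finset K) (lam : I → ℝ)

lemma PPf_nonneg (hc : 0 ≤ c) (hlam : ∀ i, 0 ≤ lam i) (x : I → ℕ) :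
    0 ≤ PPf c Ka lam x :=
  mul_nonneg (Phi_nonneg _ _ (fun _ => hc) x)
    (Finset.prod_nonneg fun i _ => pow_nonneg (hlam i) _)

lemma summable_ite (V : (I → ℕ) → ℝ) (hV0 : ∀ x, 0 ≤ V x)
    (hc : 0 ≤ c) (hlam : ∀ i, 0 ≤ lam i)
    (hsumV : Summable (fun x => V x * PPf c Ka lam x))
    (q : (I → ℕ) → Prop) [DecidablePred q] :
    Summable (fun x => if q x then V x * PPf c Ka lam x else 0) := by
  apply Summable.of_nonneg_of_le _ _ hsumV
  · intro x
    by_cases h : q x <;>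
      simp [h, mul_nonneg (hV0 x) (PPf_nonneg c Ka lam hc hlam x)]
  · intro x
    by_cases h : q x <;>
      simp [h, mul_nonneg (hV0 x) (PPf_nonneg c Ka lam hc hlam x)]

lemma Uf_zero : Uf Ka (fun _ => 0) = ∅ := by
  simp [Uf]

lemma Uf_nonempty (hKa : ∀ i, (Ka i).Nonempty) (x : I → ℕ) (hx : x ≠ fun _ => 0) :
    (Uf Ka x).Nonempty := by
  have : ∃ i, 0 < x i := by
    by_contra h
    push_neg at h
    exact hx (funext fun i => Nat.le_zero.mp (h i))
  obtain ⟨i, hi⟩ := this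
  obtain ⟨k, hk⟩ := hKa i
  exact ⟨k, Finset.mem_biUnion.mpr ⟨i, Finset.mem_filter.mpr ⟨Finset.mem_univ i, hi⟩, hk⟩⟩

/-- the shift map `y ↦ y + e_i` -/
def Tm (i : I) (y : I → ℕ) : I → ℕ := fun j => y j + if j = i then 1 else 0

lemma Tm_inj (i : I) : Function.Injective (Tm (I := I) i) := by
  intro a b hab
  funext j
  have := congrFun hab j
  simp only [Tm] at this
  omega

lemma Tm_apply_self (i : I) (y : I → ℕ) : Tm i y i = y i + 1 := by simp [Tm]

lemma filter_Tm (i : I) (y : I → ℕ) :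
    (Finset.univ.filter fun j => 0 < Tm i y j)
      = insert i (Finset.univ.filter fun j => 0 < y j) := by
  ext j
  simp only [Finset.mem_filter, Finset.mem_univ, true_and, Finset.mem_insert, Tm]
  by_cases h : j = i <;> simp [h] <;> omega

lemma Uf_Tm (Ka : I → Finset K) (i : I) (y : I → ℕ) :
    Uf Ka (Tm i y) = Ka i ∪ Uf Ka y := by
  rw [Uf, filter_Tm, Finset.biUnion_insert]
  rfl

lemma update_Tm (i : I) (y : I → ℕ) :
    Function.update (Tm i y) i (Tm i y i - 1) = y := by
  funext j
  rcases eq_or_ne j i with rfl | h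
  · simp [Tm]
  · rw [Function.update_of_ne h]
    simp [Tm, h]

lemma prod_Tm (lam : I → ℝ) (i : I) (y : I → ℕ) :
    ∏ j, lam j ^ (Tm i y j) = lam i * ∏ j, lam j ^ y j := by
  simp only [Tm, pow_add]
  rw [Finset.prod_mul_distrib]
  rw [mul_comm]
  congr 1
  have : ∀ j, lam j ^ (if j = i then 1 else 0) = if j = i then lam j else 1 := by
    intro j; by_cases h : j = i <;> simp [h]
  simp only [this]
  simp

lemma mem_range_Tm (i : I) (x : I → ℕ) (hx : 0 < x i) :
    x ∈ Set.range (Tm (I := I) i) := by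
  refine ⟨Function.update x i (x i - 1), ?_⟩
  funext j
  rcases eq_or_ne j i with rfl | h
  · simp only [Tm, Function.update_self, eq_self_iff_true, if_true]
    omega
  · simp only [Tm, if_neg h, Function.update_of_ne h, add_zero]

section MasterMain
variable {I K : Type} [Fintype I] [DecidableEq I] [DecidableEq K]
variable (c : ℝ) (Ka : I → Finset K) (lam : I → ℝ)

lemma master (hc : 0 < c) (hKa : ∀ i, (Ka i).Nonempty) (hlam : ∀ i, 0 ≤ lam i)
    (V : (I → ℕ) → ℝ) (w : I → ℝ) (hV0 : ∀ x, 0 ≤ V x)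
    (hVadd : ∀ (y : I → ℕ) (i : I), V (Tm i y) = V y + w i)
    (hsumV : Summable (fun x => V x * PPf c Ka lam x))
    (hsumG : Summable (fun x => PPf c Ka lam x))
    (L : Finset K) :
    c * ∑ k ∈ L, (SLf c Ka lam V L - SLf c Ka lam V (L.erase k))
      = (∑ i ∈ Finset.univ.filter (fun i => Ka i ⊆ L), lam i) * SLf c Ka lam V L
        + (∑ i ∈ Finset.univ.filter (fun i => Ka i ⊆ L), lam i * w i)
            * SLf c Ka lam (fun _ => 1) L := by
  classical
  have hsumG' : Summable (fun x => (fun _ : I → ℕ => (1:ℝ)) x * PPf c Ka lam x) := by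
    simpa using hsumG
  have hP0 : ∀ x, 0 ≤ PPf c Ka lam x := PPf_nonneg c Ka lam hc.le hlam
  -- Step A
  have stepA : ∀ k ∈ L, SLf c Ka lam V L - SLf c Ka lam V (L.erase k)
      = ∑' x : I → ℕ, if Uf Ka x ⊆ L ∧ k ∈ Uf Ka x then V x * PPf c Ka lam x else 0 := by
    intro k _
    rw [SLf, SLf, ← Summable.tsum_sub (summable_ite c Ka lam V hV0 hc.le hlam hsumV _)
      (summable_ite c Ka lam V hV0 hc.le hlam hsumV _)]
    apply tsum_congr
    intro x
    by_cases h1 : Uf Ka x ⊆ L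
    · by_cases h2 : k ∈ Uf Ka x
      · rw [if_pos h1, if_neg (fun hcon => Finset.notMem_erase k L (hcon h2)),
          if_pos ⟨h1, h2⟩, sub_zero]
      · rw [if_pos h1, if_pos (Finset.subset_erase.mpr ⟨h1, h2⟩),
          if_neg (fun hcon => h2 hcon.2), sub_self]
    · rw [if_neg h1, if_neg (fun hcon => h1 (hcon.trans (Finset.erase_subset k L))),
        if_neg (fun hcon => h1 hcon.1), sub_self]
  -- Step B
  have stepB : ∑ k ∈ L, (SLf c Ka lam V L - SLf c Ka lam V (L.erase k))
      = ∑' x : I → ℕ, if Uf Ka x ⊆ L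
          then ((Uf Ka x).card : ℝ) * (V x * PPf c Ka lam x) else 0 := by
    rw [Finset.sum_congr rfl stepA,
      ← Summable.tsum_finsetSum (fun k _ => summable_ite c Ka lam V hV0 hc.le hlam hsumV _)]
    apply tsum_congr
    intro x
    by_cases h1 : Uf Ka x ⊆ L
    · simp only [h1, true_and, if_pos]
      rw [Finset.sum_ite_mem, Finset.inter_eq_right.mpr h1, Finset.sum_const,
        nsmul_eq_mul]
    · simp [h1]
  -- the summand after applying the Phi recursion
  set F' : I → (I → ℕ) → ℝ := fun i x =>
    if 0 < x i ∧ Uf Ka x ⊆ L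
      then V x * Phi (fun _ => c) Ka (Function.update x i (x i - 1)) * ∏ j, lam j ^ x j
      else 0 with hF'
  -- Step DE : pointwise identity
  have stepDE : ∀ x : I → ℕ, c * (if Uf Ka x ⊆ L
        then ((Uf Ka x).card : ℝ) * (V x * PPf c Ka lam x) else 0)
      = ∑ i, F' i x := by
    intro x
    rcases eq_or_ne x (fun _ => 0) with rfl | hx
    · simp [hF', Uf_zero]
    · by_cases h1 : Uf Ka x ⊆ L
      · rw [if_pos h1]
        have hUne : (Uf Ka x).Nonempty := Uf_nonempty Ka hKa x hx
        have hD : (∑ _k ∈ Uf Ka x, c) ≠ 0 := by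
          rw [Finset.sum_const, nsmul_eq_mul]
          have := hUne.card_pos
          have : (0:ℝ) < ((Uf Ka x).card : ℝ) := by exact_mod_cast this
          positivity
        have hmul := Phi_mul (fun _ => c) Ka x hx (by simpa [Uf] using hD)
        have hcard : (∑ _k ∈ Uf Ka x, c) = ((Uf Ka x).card : ℝ) * c := by
          rw [Finset.sum_const, nsmul_eq_mul]
        rw [Finset.sum_const, nsmul_eq_mul] at hmul
        have hmul2 : ((Uf Ka x).card : ℝ) * c * Phi (fun _ => c) Ka x
            = ∑ i ∈ Finset.univ.filter (fun i => 0 < x i),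
                Phi (fun _ => c) Ka (Function.update x i (x i - 1)) := by
          rw [Uf]; exact hmul
        calc c * (((Uf Ka x).card : ℝ) * (V x * PPf c Ka lam x))
            = V x * (((Uf Ka x).card : ℝ) * c * Phi (fun _ => c) Ka x)
              * ∏ j, lam j ^ x j := by rw [PPf]; ring
          _ = V x * (∑ i ∈ Finset.univ.filter (fun i => 0 < x i),
                Phi (fun _ => c) Ka (Function.update x i (x i - 1)))
              * ∏ j, lam j ^ x j := by rw [hmul2]
          _ = ∑ i ∈ Finset.univ.filter (fun i => 0 < x i),
                V x * Phi (fun _ => c) Ka (Function.update x i (x i - 1))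
                  * ∏ j, lam j ^ x j := by
                rw [Finset.mul_sum, Finset.sum_mul]
          _ = ∑ i, F' i x := by
                simp only [hF']
                rw [Finset.sum_filter]
                apply Finset.sum_congr rfl
                intro i _
                by_cases h2 : 0 < x i <;> simp [h2, h1]
      · rw [if_neg h1]
        simp [hF', h1]
  -- composition with the shift map
  have hcomp : ∀ (i : I) (y : I → ℕ), F' i (Tm i y)
      = if Ka i ⊆ L then (if Uf Ka y ⊆ L
          then lam i * (V y * PPf c Ka lam y) + (lam i * w i) * PPf c Ka lam y
          else 0) else 0 := by
    intro i y
    have h1 : 0 < Tm i y i := by rw [Tm_apply_self]; omega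
    simp only [hF', Uf_Tm, update_Tm, Finset.union_subset_iff]
    by_cases h2 : Ka i ⊆ L
    · by_cases h3 : Uf Ka y ⊆ L
      · rw [if_pos ⟨h1, h2, h3⟩, if_pos h2, if_pos h3, hVadd y i, prod_Tm, PPf]
        ring
      · rw [if_neg (fun hcon => h3 hcon.2.2), if_pos h2, if_neg h3]
    · rw [if_neg (fun hcon => h2 hcon.2.1), if_neg h2]
  have hsplit : ∀ i : I, (fun y => if Uf Ka y ⊆ L
        then lam i * (V y * PPf c Ka lam y) + (lam i * w i) * PPf c Ka lam y else 0)
      = fun y => lam i * (if Uf Ka y ⊆ L then V y * PPf c Ka lam y else 0)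
          + (lam i * w i) * (if Uf Ka y ⊆ L
              then (fun _ : I → ℕ => (1:ℝ)) y * PPf c Ka lam y else 0) := by
    intro i
    funext y
    by_cases h3 : Uf Ka y ⊆ L <;> simp [h3]
  have hsummand : ∀ i : I, Summable (fun y => if Ka i ⊆ L then (if Uf Ka y ⊆ L
      then lam i * (V y * PPf c Ka lam y) + (lam i * w i) * PPf c Ka lam y
      else 0) else 0) := by
    intro i
    by_cases h2 : Ka i ⊆ L
    · simp only [if_pos h2]
      rw [hsplit i]
      exact ((summable_ite c Ka lam V hV0 hc.le hlam hsumV _).mul_left _).add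
        ((summable_ite c Ka lam _ (fun _ => zero_le_one) hc.le hlam hsumG' _).mul_left _)
    · simp only [if_neg h2]
      exact summable_zero
  have hrange : ∀ (i : I) (x : I → ℕ), x ∉ Set.range (Tm (I := I) i) → F' i x = 0 := by
    intro i x hx
    simp only [hF']
    rw [if_neg]
    rintro ⟨hxi, -⟩
    exact hx (mem_range_Tm i x hxi)
  have hFsum : ∀ i : I, Summable (F' i) := by
    intro i
    rw [← (Tm_inj i).summable_iff (hrange i)]
    have : F' i ∘ Tm i = fun y => if Ka i ⊆ L then (if Uf Ka y ⊆ L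
        then lam i * (V y * PPf c Ka lam y) + (lam i * w i) * PPf c Ka lam y
        else 0) else 0 := funext fun y => hcomp i y
    rw [this]
    exact hsummand i
  have hsupp : ∀ i : I, Function.support (F' i) ⊆ Set.range (Tm (I := I) i) := by
    intro i x hx
    by_contra hcon
    exact hx (hrange i x hcon)
  have hti : ∀ i : I, ∑' x : I → ℕ, F' i x
      = if Ka i ⊆ L then lam i * SLf c Ka lam V L
          + (lam i * w i) * SLf c Ka lam (fun _ => 1) L else 0 := by
    intro i
    rw [← (Tm_inj i).tsum_eq (hsupp i)]
    rw [tsum_congr (hcomp i)]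
    by_cases h2 : Ka i ⊆ L
    · simp only [if_pos h2]
      rw [hsplit i, Summable.tsum_add ((summable_ite c Ka lam V hV0 hc.le hlam hsumV _).mul_left _)
        ((summable_ite c Ka lam _ (fun _ => zero_le_one) hc.le hlam hsumG' _).mul_left _),
        tsum_mul_left, tsum_mul_left, SLf, SLf]
    · simp only [if_neg h2, tsum_zero]
  calc c * ∑ k ∈ L, (SLf c Ka lam V L - SLf c Ka lam V (L.erase k))
      = c * ∑' x : I → ℕ, if Uf Ka x ⊆ L
          then ((Uf Ka x).card : ℝ) * (V x * PPf c Ka lam x) else 0 := by rw [stepB]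
    _ = ∑' x : I → ℕ, c * (if Uf Ka x ⊆ L
          then ((Uf Ka x).card : ℝ) * (V x * PPf c Ka lam x) else 0) := tsum_mul_left.symm
    _ = ∑' x : I → ℕ, ∑ i, F' i x := tsum_congr stepDE
    _ = ∑ i, ∑' x : I → ℕ, F' i x := Summable.tsum_finsetSum (fun i _ => hFsum i)
    _ = ∑ i, if Ka i ⊆ L then lam i * SLf c Ka lam V L
          + (lam i * w i) * SLf c Ka lam (fun _ => 1) L else 0 :=
        Finset.sum_congr rfl (fun i _ => hti i)
    _ = ∑ i ∈ Finset.univ.filter (fun i => Ka i ⊆ L), (lam i * SLf c Ka lam V L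
          + (lam i * w i) * SLf c Ka lam (fun _ => 1) L) := (Finset.sum_filter _ _).symm
    _ = (∑ i ∈ Finset.univ.filter (fun i => Ka i ⊆ L), lam i) * SLf c Ka lam V L
        + (∑ i ∈ Finset.univ.filter (fun i => Ka i ⊆ L), lam i * w i)
            * SLf c Ka lam (fun _ => 1) L := by
        rw [Finset.sum_add_distrib, Finset.sum_mul, Finset.sum_mul]

end MasterMain

section Symmetry
variable {I K : Type} [Fintype I] [DecidableEq I] [DecidableEq K]
variable (c : ℝ) (Ka : I → Finset K) (lam : I → ℝ)

lemma Uf_comp (e : I ≃ I) (π : K ≃ K) (hKa : ∀ i, Ka (e i) = (Ka i).image π)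
    (x : I → ℕ) : Uf Ka (fun i => x (e.symm i)) = (Uf Ka x).image π := by
  rw [Uf, Uf, filter_comp_eq e x, biUnion_map_eq e π Ka hKa]

lemma SLf_comp (e : I ≃ I) (π : K ≃ K) (hKa : ∀ i, Ka (e i) = (Ka i).image π)
    (hlam : ∀ i, lam (e i) = lam i) (V : (I → ℕ) → ℝ)
    (hV : ∀ x : I → ℕ, V (fun i => x (e.symm i)) = V x) (L : Finset K) :
    SLf c Ka lam V (L.image π) = SLf c Ka lam V L := by
  rw [SLf, SLf]
  rw [← Equiv.tsum_eq (Equiv.arrowCongr e (Equiv.refl ℕ))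
    (fun x => if Uf Ka x ⊆ L.image π then V x * PPf c Ka lam x else 0)]
  apply tsum_congr
  intro y
  have hE : (Equiv.arrowCongr e (Equiv.refl ℕ)) y = fun i => y (e.symm i) := rfl
  rw [hE]
  have h1 : Uf Ka (fun i => y (e.symm i)) ⊆ L.image π ↔ Uf Ka y ⊆ L := by
    rw [Uf_comp Ka e π hKa y]
    exact Finset.image_subset_image_iff π.injective
  have h2 : PPf c Ka lam (fun i => y (e.symm i)) = PPf c Ka lam y := by
    rw [PPf, PPf, Phi_comp c Ka e π hKa y]
    congr 1
    rw [← Equiv.prod_comp e (fun i => lam i ^ y (e.symm i))]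
    apply Finset.prod_congr rfl
    intro i _
    rw [hlam i, Equiv.symm_apply_apply]
  by_cases h : Uf Ka y ⊆ L
  · rw [if_pos (h1.mpr h), if_pos h, hV y, h2]
  · rw [if_neg (fun hc' => h (h1.mp hc')), if_neg h]

lemma exists_perm_image {L L' : Finset K} [Fintype K] (h : L.card = L'.card) :
    ∃ π : Equiv.Perm K, L.image π = L' := by
  classical
  have h1 : Fintype.card {x // x ∈ L} = Fintype.card {x // x ∈ L'} := by
    simp [Fintype.card_coe, h]
  have h2 : Fintype.card {x // x ∉ L} = Fintype.card {x // x ∉ L'} := by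
    have := Fintype.card_subtype_compl (fun x => x ∈ L)
    have := Fintype.card_subtype_compl (fun x => x ∈ L')
    simp only [Fintype.card_subtype_compl, Fintype.card_coe, h]
  let e1 : {x // x ∈ L} ≃ {x // x ∈ L'} := Fintype.equivOfCardEq h1
  let e2 : {x // x ∉ L} ≃ {x // x ∉ L'} := Fintype.equivOfCardEq h2
  let π : Equiv.Perm K :=
    ((Equiv.sumCompl (· ∈ L)).symm.trans ((e1.sumCongr e2).trans (Equiv.sumCompl (· ∈ L'))))
  refine ⟨π, ?_⟩
  apply Finset.eq_of_subset_of_card_le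
  · intro k hk
    rw [Finset.mem_image] at hk
    obtain ⟨a, ha, rfl⟩ := hk
    have : π a = ↑(e1 ⟨a, ha⟩) := by
      simp only [π, Equiv.trans_apply]
      rw [Equiv.sumCompl_symm_apply_of_pos (p := (· ∈ L)) ha]
      rfl
    rw [this]
    exact (e1 ⟨a, ha⟩).2
  · rw [Finset.card_image_of_injective _ π.injective, h]

end Symmetry

section Het
variable (K N : ℕ) (d : Fin N → ℕ)

def finsetPermEquiv (π : Equiv.Perm (Fin K)) (m : ℕ) :
    {S : Finset (Fin K) // S.card = m} ≃ {S : Finset (Fin K) // S.card = m} where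
  toFun S := ⟨S.1.image π, by
    rw [Finset.card_image_of_injective _ π.injective]; exact S.2⟩
  invFun S := ⟨S.1.image π.symm, by
    rw [Finset.card_image_of_injective _ π.symm.injective]; exact S.2⟩
  left_inv S := by
    apply Subtype.ext
    simp [Finset.image_image]
  right_inv S := by
    apply Subtype.ext
    simp [Finset.image_image]

def hetPerm (π : Equiv.Perm (Fin K)) : HetCls K N d ≃ HetCls K N d :=
  Equiv.sigmaCongrRight (fun u => finsetPermEquiv K π (d u))

lemma hetPerm_Ka (π : Equiv.Perm (Fin K)) (c : HetCls K N d) :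
    ((hetPerm K N d π) c).2.1 = c.2.1.image π := rfl

lemma hetPerm_fst (π : Equiv.Perm (Fin K)) (c : HetCls K N d) :
    ((hetPerm K N d π) c).1 = c.1 := rfl

lemma hetPerm_symm_apply (π : Equiv.Perm (Fin K)) (u : Fin N)
    (S : {S : Finset (Fin K) // S.card = d u}) :
    (hetPerm K N d π).symm ⟨u, S⟩ = ⟨u, (finsetPermEquiv K π (d u)).symm S⟩ := rfl

lemma nu_comp (π : Equiv.Perm (Fin K)) (u : Fin N) (x : HetCls K N d → ℕ) :
    ∑ S : {S : Finset (Fin K) // S.card = d u},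
        ((x ((hetPerm K N d π).symm ⟨u, S⟩) : ℕ) : ℝ)
      = ∑ S : {S : Finset (Fin K) // S.card = d u}, ((x ⟨u, S⟩ : ℕ) : ℝ) := by
  simp only [hetPerm_symm_apply]
  exact Equiv.sum_comp ((finsetPermEquiv K π (d u)).symm)
    (fun S => ((x ⟨u, S⟩ : ℕ) : ℝ))

lemma nu_Tm (u : Fin N) (cc : HetCls K N d) (y : HetCls K N d → ℕ) :
    (∑ S : {S : Finset (Fin K) // S.card = d u}, ((Tm cc y ⟨u, S⟩ : ℕ) : ℝ))
      = (∑ S : {S : Finset (Fin K) // S.card = d u}, ((y ⟨u, S⟩ : ℕ) : ℝ))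
        + (if cc.1 = u then 1 else 0) := by
  classical
  simp only [Tm]
  push_cast
  rw [Finset.sum_add_distrib]
  congr 1
  obtain ⟨v, S0⟩ := cc
  by_cases hvu : v = u
  · subst hvu
    rw [if_pos rfl]
    rw [Finset.sum_eq_single S0]
    · simp
    · intro S _ hS
      have hne : (⟨v, S⟩ : HetCls K N d) ≠ ⟨v, S0⟩ :=
        fun hcon => hS (eq_of_heq (Sigma.mk.inj_iff.mp hcon).2)
      simp [hne]
    · intro h; exact absurd (Finset.mem_univ S0) h
  · rw [if_neg (by simpa using hvu)]
    apply Finset.sum_eq_zero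
    intro S _
    have hne : (⟨u, S⟩ : HetCls K N d) ≠ ⟨v, S0⟩ :=
      fun hcon => hvu ((Sigma.mk.inj_iff.mp hcon).1.symm)
    simp [hne]

lemma card_subsets (m : ℕ) (L : Finset (Fin K)) :
    (Finset.univ.filter (fun S : {S : Finset (Fin K) // S.card = m} => S.1 ⊆ L)).card
      = L.card.choose m := by
  classical
  rw [← Finset.card_powersetCard]
  apply Finset.card_bij (fun S _ => S.1)
  · intro S hS
    rw [Finset.mem_powersetCard]
    exact ⟨(Finset.mem_filter.mp hS).2, S.2⟩
  · intro a _ b _ hab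
    exact Subtype.ext hab
  · intro T hT
    rw [Finset.mem_powersetCard] at hT
    exact ⟨⟨T, hT.2⟩, Finset.mem_filter.mpr ⟨Finset.mem_univ _, hT.1⟩, rfl⟩

lemma choose_mul_id (dd n : ℕ) (h1 : 1 ≤ dd) (hn : 1 ≤ n) :
    dd * n.choose dd = n * (n - 1).choose (dd - 1) := by
  obtain ⟨n', rfl⟩ : ∃ n', n = n' + 1 := ⟨n - 1, by omega⟩
  obtain ⟨d', rfl⟩ : ∃ d', dd = d' + 1 := ⟨dd - 1, by omega⟩
  simp only [Nat.add_sub_cancel]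
  rw [mul_comm]
  exact (Nat.add_one_mul_choose_eq n' d').symm

lemma ratio_id (Kk ℓ dd : ℕ) (h1 : 1 ≤ dd) (hdK : dd ≤ Kk) (hℓ : 1 ≤ ℓ) :
    (Kk : ℝ) * (ℓ.choose dd : ℝ) / (Kk.choose dd : ℝ)
      = (ℓ : ℝ) * ((ℓ - 1).choose (dd - 1) : ℝ) / ((Kk - 1).choose (dd - 1) : ℝ) := by
  have hK1 : 1 ≤ Kk := le_trans h1 hdK
  have hA : (0 : ℝ) < (Kk.choose dd : ℝ) := by
    exact_mod_cast Nat.choose_pos hdK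
  have hB : (0 : ℝ) < ((Kk - 1).choose (dd - 1) : ℝ) := by
    exact_mod_cast Nat.choose_pos (by omega)
  have hdd : (dd : ℝ) ≠ 0 := by
    have : 0 < dd := h1
    exact_mod_cast this.ne'
  rw [div_eq_div_iff hA.ne' hB.ne']
  apply mul_left_cancel₀ hdd
  have e1 : (dd : ℝ) * (ℓ.choose dd : ℝ) = (ℓ : ℝ) * ((ℓ - 1).choose (dd - 1) : ℝ) := by
    exact_mod_cast choose_mul_id dd ℓ h1 hℓ
  have e2 : (dd : ℝ) * (Kk.choose dd : ℝ) = (Kk : ℝ) * ((Kk - 1).choose (dd - 1) : ℝ) := by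
    exact_mod_cast choose_mul_id dd Kk h1 hK1
  calc (dd : ℝ) * ((Kk : ℝ) * (ℓ.choose dd : ℝ) * ((Kk - 1).choose (dd - 1) : ℝ))
      = (Kk : ℝ) * ((dd : ℝ) * (ℓ.choose dd : ℝ)) * ((Kk - 1).choose (dd - 1) : ℝ) := by ring
    _ = (Kk : ℝ) * ((ℓ : ℝ) * ((ℓ - 1).choose (dd - 1) : ℝ)) * ((Kk - 1).choose (dd - 1) : ℝ) := by rw [e1]
    _ = (ℓ : ℝ) * ((ℓ - 1).choose (dd - 1) : ℝ) * ((Kk : ℝ) * ((Kk - 1).choose (dd - 1) : ℝ)) := by ring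
    _ = (ℓ : ℝ) * ((ℓ - 1).choose (dd - 1) : ℝ) * ((dd : ℝ) * (Kk.choose dd : ℝ)) := by rw [e2]
    _ = (dd : ℝ) * ((ℓ : ℝ) * ((ℓ - 1).choose (dd - 1) : ℝ) * (Kk.choose dd : ℝ)) := by ring

end Het

section SLfHelpers
variable {I K : Type} [Fintype I] [DecidableEq I] [DecidableEq K]
variable (c : ℝ) (Ka : I → Finset K) (lam : I → ℝ)

lemma PPf_zero : PPf c Ka lam (fun _ => 0) = 1 := by
  rw [PPf, Phi_zero]
  simp

lemma SLf_empty (hKa : ∀ i, (Ka i).Nonempty) (V : (I → ℕ) → ℝ) :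
    SLf c Ka lam V ∅ = V (fun _ => 0) := by
  rw [SLf, tsum_eq_single (fun _ => 0)]
  · rw [if_pos (by rw [Uf_zero]), PPf_zero, mul_one]
  · intro x hx
    rw [if_neg]
    intro hcon
    rw [Finset.subset_empty] at hcon
    exact Finset.not_nonempty_empty (hcon ▸ Uf_nonempty Ka hKa x hx)

lemma one_le_SLf_one (hc : 0 ≤ c) (hlam : ∀ i, 0 ≤ lam i)
    (hsumG : Summable (fun x => PPf c Ka lam x)) (L : Finset K) :
    1 ≤ SLf c Ka lam (fun _ => 1) L := by
  have hs := summable_ite c Ka lam (fun _ => 1) (fun _ => zero_le_one) hc hlam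
    (by simpa using hsumG) (fun x => Uf Ka x ⊆ L)
  have h := Summable.le_tsum hs (fun _ => 0) (fun x _ => by
    by_cases hq : Uf Ka x ⊆ L
    · rw [if_pos hq, one_mul]
      exact PPf_nonneg c Ka lam hc hlam x
    · rw [if_neg hq])
  calc (1 : ℝ)
      = (if Uf Ka (fun _ => 0) ⊆ L then (fun _ : I → ℕ => (1:ℝ)) (fun _ => 0)
          * PPf c Ka lam (fun _ => 0) else 0) := by
        rw [if_pos (by rw [Uf_zero]; exact Finset.empty_subset L), PPf_zero, mul_one]
    _ ≤ SLf c Ka lam (fun _ => 1) L := h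

lemma SLf_univ_eq [Fintype K] (V : (I → ℕ) → ℝ) :
    SLf c Ka lam V Finset.univ = ∑' x : I → ℕ, V x * PPf c Ka lam x :=
  tsum_congr fun x => if_pos (Finset.subset_univ _)

end SLfHelpers

lemma Ls_card {K : ℕ} (l : ℕ) (h : l ≤ K) :
    (Finset.univ.filter fun k : Fin K => (k : ℕ) < l).card = l := by
  have heq : (Finset.univ.filter fun k : Fin K => (k : ℕ) < l)
      = (Finset.univ : Finset (Fin l)).map (Fin.castLEEmb h) := by
    ext k
    simp only [Finset.mem_filter, Finset.mem_univ, true_and, Finset.mem_map]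
    constructor
    · intro hk; exact ⟨⟨k, hk⟩, rfl⟩
    · rintro ⟨a, rfl⟩; exact a.2
  rw [heq, Finset.card_map, Finset.card_univ, Fintype.card_fin]

lemma Ls_top {K : ℕ} : (Finset.univ.filter fun k : Fin K => (k : ℕ) < K) = Finset.univ :=
  Finset.filter_true_of_mem (fun k _ => k.isLt)

lemma Ls_zero {K : ℕ} : (Finset.univ.filter fun k : Fin K => (k : ℕ) < 0) = ∅ := by
  apply Finset.filter_false_of_mem
  intro k _
  omega

section Rates
variable (K N : ℕ) (d : Fin N → ℕ) (p : Fin N → ℝ) (lam : ℝ)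

lemma rate_sum (L : Finset (Fin K)) :
    ∑ i ∈ Finset.univ.filter (fun i : HetCls K N d => i.2.1 ⊆ L), hetRate K N d p lam i
      = ∑ v, (K : ℝ) * lam * p v / (K.choose (d v) : ℝ) * (L.card.choose (d v) : ℝ) := by
  classical
  rw [Finset.sum_filter, ← Finset.univ_sigma_univ, Finset.sum_sigma]
  apply Finset.sum_congr rfl
  intro v _
  have hr : ∀ S : {S : Finset (Fin K) // S.card = d v},
      hetRate K N d p lam ⟨v, S⟩ = (K : ℝ) * lam * p v / (K.choose (d v) : ℝ) :=
    fun _ => rfl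
  calc ∑ S : {S : Finset (Fin K) // S.card = d v},
        (if (⟨v, S⟩ : HetCls K N d).2.1 ⊆ L then hetRate K N d p lam ⟨v, S⟩ else 0)
      = ∑ S : {S : Finset (Fin K) // S.card = d v},
          (if S.1 ⊆ L then (K : ℝ) * lam * p v / (K.choose (d v) : ℝ) else 0) := by
        apply Finset.sum_congr rfl
        intro S _
        rw [hr S]
    _ = ∑ S ∈ Finset.univ.filter (fun S : {S : Finset (Fin K) // S.card = d v} => S.1 ⊆ L),
          (K : ℝ) * lam * p v / (K.choose (d v) : ℝ) := (Finset.sum_filter _ _).symm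
    _ = ((Finset.univ.filter (fun S : {S : Finset (Fin K) // S.card = d v} => S.1 ⊆ L)).card : ℝ)
          * ((K : ℝ) * lam * p v / (K.choose (d v) : ℝ)) := by
        rw [Finset.sum_const, nsmul_eq_mul]
    _ = (K : ℝ) * lam * p v / (K.choose (d v) : ℝ) * (L.card.choose (d v) : ℝ) := by
        rw [card_subsets K (d v) L, mul_comm]

lemma rate_sum_u (u : Fin N) (L : Finset (Fin K)) :
    ∑ i ∈ Finset.univ.filter (fun i : HetCls K N d => i.2.1 ⊆ L),
        hetRate K N d p lam i * (if i.1 = u then (1:ℝ) else 0)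
      = (K : ℝ) * lam * p u / (K.choose (d u) : ℝ) * (L.card.choose (d u) : ℝ) := by
  classical
  rw [Finset.sum_filter, ← Finset.univ_sigma_univ, Finset.sum_sigma]
  rw [Finset.sum_eq_single u]
  · have hr : ∀ S : {S : Finset (Fin K) // S.card = d u},
        hetRate K N d p lam ⟨u, S⟩ * (if (⟨u, S⟩ : HetCls K N d).1 = u then (1:ℝ) else 0)
          = (K : ℝ) * lam * p u / (K.choose (d u) : ℝ) := by
      intro S
      rw [if_pos rfl, mul_one]
      rfl
    calc ∑ S : {S : Finset (Fin K) // S.card = d u},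
          (if (⟨u, S⟩ : HetCls K N d).2.1 ⊆ L
            then hetRate K N d p lam ⟨u, S⟩ * (if (⟨u, S⟩ : HetCls K N d).1 = u then (1:ℝ) else 0)
            else 0)
        = ∑ S : {S : Finset (Fin K) // S.card = d u},
            (if S.1 ⊆ L then (K : ℝ) * lam * p u / (K.choose (d u) : ℝ) else 0) := by
          apply Finset.sum_congr rfl
          intro S _
          rw [hr S]
      _ = ∑ S ∈ Finset.univ.filter (fun S : {S : Finset (Fin K) // S.card = d u} => S.1 ⊆ L),
            (K : ℝ) * lam * p u / (K.choose (d u) : ℝ) := (Finset.sum_filter _ _).symm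
      _ = (K : ℝ) * lam * p u / (K.choose (d u) : ℝ) * (L.card.choose (d u) : ℝ) := by
          rw [Finset.sum_const, nsmul_eq_mul, card_subsets K (d u) L, mul_comm]
  · intro v _ hvu
    apply Finset.sum_eq_zero
    intro S _
    have : (if (⟨v, S⟩ : HetCls K N d).1 = u then (1:ℝ) else 0) = 0 := if_neg hvu
    rw [this, mul_zero, ite_self]
  · intro h
    exact absurd (Finset.mem_univ u) h

end Rates

noncomputable def gSL (K N : ℕ) (d : Fin N → ℕ) (p : Fin N → ℝ) (lamr μr : ℝ) (ℓ : ℕ) : ℝ :=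
  SLf μr (fun c : HetCls K N d => c.2.1) (hetRate K N d p lamr) (fun _ => 1)
    (Finset.univ.filter fun k : Fin K => (k : ℕ) < ℓ)

noncomputable def tSL (K N : ℕ) (d : Fin N → ℕ) (p : Fin N → ℝ) (lamr μr : ℝ)
    (u : Fin N) (ℓ : ℕ) : ℝ :=
  SLf μr (fun c : HetCls K N d => c.2.1) (hetRate K N d p lamr)
    (fun x => ∑ S : {S : Finset (Fin K) // S.card = d u}, ((x ⟨u, S⟩ : ℕ) : ℝ))
    (Finset.univ.filter fun k : Fin K => (k : ℕ) < ℓ)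

noncomputable def sigf (K N : ℕ) (d : Fin N → ℕ) (p : Fin N → ℝ) (m : ℕ) : ℝ :=
  ∑ v, p v * ((m - 1).choose (d v - 1) : ℝ) / ((K - 1).choose (d v - 1) : ℝ)

noncomputable def quf (K N : ℕ) (d : Fin N → ℕ) (p : Fin N → ℝ) (u : Fin N) (m : ℕ) : ℝ :=
  p u * ((m - 1).choose (d u - 1) : ℝ) / ((K - 1).choose (d u - 1) : ℝ)

section Rec
variable (K N : ℕ) (d : Fin N → ℕ) (p : Fin N → ℝ) (lamr μr : ℝ) (u : Fin N)

lemma hetKane (hd1 : ∀ v, 1 ≤ d v) :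
    ∀ i : HetCls K N d, ((fun c : HetCls K N d => c.2.1) i).Nonempty := by
  intro i
  apply Finset.card_pos.mp
  rw [i.2.2]
  exact hd1 i.1

lemma hetRate_nonneg (hlam : 0 ≤ lamr) (hp : ∀ v, 0 ≤ p v) :
    ∀ i : HetCls K N d, 0 ≤ hetRate K N d p lamr i := fun i =>
  div_nonneg (mul_nonneg (mul_nonneg (Nat.cast_nonneg K) hlam) (hp i.1)) (Nat.cast_nonneg _)

lemma gSL_zero (hd1 : ∀ v, 1 ≤ d v) : gSL K N d p lamr μr 0 = 1 := by
  rw [gSL, Ls_zero, SLf_empty _ _ _ (hetKane K N d hd1)]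

lemma tSL_zero (hd1 : ∀ v, 1 ≤ d v) : tSL K N d p lamr μr u 0 = 0 := by
  rw [tSL, Ls_zero, SLf_empty _ _ _ (hetKane K N d hd1)]
  simp

lemma gSL_ge_one (hμ : 0 < μr) (hlam : 0 ≤ lamr) (hp : ∀ v, 0 ≤ p v)
    (hsumG : Summable (fun x : HetCls K N d → ℕ =>
      PPf μr (fun c : HetCls K N d => c.2.1) (hetRate K N d p lamr) x)) (ℓ : ℕ) :
    1 ≤ gSL K N d p lamr μr ℓ :=
  one_le_SLf_one μr _ _ hμ.le (hetRate_nonneg K N d p lamr hlam hp) hsumG _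

lemma hetSym (hμ : 0 < μr) (V : (HetCls K N d → ℕ) → ℝ)
    (hV : ∀ (π : Equiv.Perm (Fin K)) (x : HetCls K N d → ℕ),
      V (fun i => x ((hetPerm K N d π).symm i)) = V x)
    (L L' : Finset (Fin K)) (hcard : L.card = L'.card) :
    SLf μr (fun c : HetCls K N d => c.2.1) (hetRate K N d p lamr) V L
      = SLf μr (fun c : HetCls K N d => c.2.1) (hetRate K N d p lamr) V L' := by
  obtain ⟨π, hπ⟩ := exists_perm_image hcard
  rw [← hπ]
  exact (SLf_comp μr (fun c : HetCls K N d => c.2.1) (hetRate K N d p lamr)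
    (hetPerm K N d π) π (fun i => rfl) (fun i => rfl) V (hV π) L).symm

lemma gSL_rec (hμ : 0 < μr) (hlam : 0 ≤ lamr) (hd1 : ∀ v, 1 ≤ d v) (hdK : ∀ v, d v ≤ K)
    (hp : ∀ v, 0 ≤ p v)
    (hsumG : Summable (fun x : HetCls K N d → ℕ =>
      PPf μr (fun c : HetCls K N d => c.2.1) (hetRate K N d p lamr) x))
    (ℓ : ℕ) (h1 : 1 ≤ ℓ) (h2 : ℓ ≤ K) :
    gSL K N d p lamr μr ℓ * (1 - lamr / μr * sigf K N d p ℓ) = gSL K N d p lamr μr (ℓ - 1) := by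
  classical
  have hM := master μr (fun c : HetCls K N d => c.2.1) (hetRate K N d p lamr) hμ
    (hetKane K N d hd1) (hetRate_nonneg K N d p lamr hlam hp)
    (fun _ => 1) (fun _ => 0) (fun _ => zero_le_one) (fun y i => by norm_num)
    (by simpa using hsumG) hsumG (Finset.univ.filter fun k : Fin K => (k : ℕ) < ℓ)
  simp only [mul_zero, Finset.sum_const_zero, zero_mul, add_zero] at hM
  have herase : ∀ k ∈ (Finset.univ.filter fun k : Fin K => (k : ℕ) < ℓ),
      SLf μr (fun c : HetCls K N d => c.2.1) (hetRate K N d p lamr) (fun _ => 1)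
        ((Finset.univ.filter fun k : Fin K => (k : ℕ) < ℓ).erase k)
        = gSL K N d p lamr μr (ℓ - 1) := by
    intro k hk
    apply hetSym K N d p lamr μr hμ (fun _ => 1) (fun π x => rfl)
    rw [Finset.card_erase_of_mem hk, Ls_card ℓ h2, Ls_card (ℓ - 1) (by omega)]
  rw [Finset.sum_congr rfl (fun k hk => by rw [herase k hk])] at hM
  rw [Finset.sum_const, Ls_card ℓ h2, nsmul_eq_mul, rate_sum K N d p lamr _,
    Ls_card ℓ h2] at hM
  have hLam : (∑ v, (K : ℝ) * lamr * p v / (K.choose (d v) : ℝ) * ((ℓ : ℕ).choose (d v) : ℝ))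
      = lamr * ℓ * sigf K N d p ℓ := by
    rw [sigf, Finset.mul_sum]
    apply Finset.sum_congr rfl
    intro v _
    have hr := ratio_id K ℓ (d v) (hd1 v) (hdK v) h1
    linear_combination (lamr * p v) * hr
  rw [hLam] at hM
  have hfold : SLf μr (fun c : HetCls K N d => c.2.1) (hetRate K N d p lamr) (fun _ => 1)
      (Finset.univ.filter fun k : Fin K => (k : ℕ) < ℓ) = gSL K N d p lamr μr ℓ := rfl
  rw [hfold] at hM
  have hℓ0 : ((ℓ : ℕ) : ℝ) ≠ 0 := Nat.cast_ne_zero.mpr (by omega)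
  have hM' : μr * (gSL K N d p lamr μr ℓ - gSL K N d p lamr μr (ℓ - 1))
      = lamr * sigf K N d p ℓ * gSL K N d p lamr μr ℓ := by
    apply mul_left_cancel₀ hℓ0
    linear_combination hM
  field_simp [hμ.ne']
  linear_combination hM'

lemma tSL_rec (hμ : 0 < μr) (hlam : 0 ≤ lamr) (hd1 : ∀ v, 1 ≤ d v) (hdK : ∀ v, d v ≤ K)
    (hp : ∀ v, 0 ≤ p v)
    (hsumG : Summable (fun x : HetCls K N d → ℕ =>
      PPf μr (fun c : HetCls K N d => c.2.1) (hetRate K N d p lamr) x))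
    (hsumV : Summable (fun x : HetCls K N d → ℕ =>
      (∑ S : {S : Finset (Fin K) // S.card = d u}, ((x ⟨u, S⟩ : ℕ) : ℝ))
        * PPf μr (fun c : HetCls K N d => c.2.1) (hetRate K N d p lamr) x))
    (ℓ : ℕ) (h1 : 1 ≤ ℓ) (h2 : ℓ ≤ K) :
    tSL K N d p lamr μr u ℓ * (1 - lamr / μr * sigf K N d p ℓ)
      = tSL K N d p lamr μr u (ℓ - 1)
        + lamr / μr * quf K N d p u ℓ * gSL K N d p lamr μr ℓ := by
  classical
  have hM := master μr (fun c : HetCls K N d => c.2.1) (hetRate K N d p lamr) hμ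
    (hetKane K N d hd1) (hetRate_nonneg K N d p lamr hlam hp)
    (fun x => ∑ S : {S : Finset (Fin K) // S.card = d u}, ((x ⟨u, S⟩ : ℕ) : ℝ))
    (fun c => if c.1 = u then (1:ℝ) else 0)
    (fun x => Finset.sum_nonneg (fun S _ => Nat.cast_nonneg _))
    (fun y i => nu_Tm K N d u i y)
    hsumV hsumG (Finset.univ.filter fun k : Fin K => (k : ℕ) < ℓ)
  have herase : ∀ k ∈ (Finset.univ.filter fun k : Fin K => (k : ℕ) < ℓ),
      SLf μr (fun c : HetCls K N d => c.2.1) (hetRate K N d p lamr)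
        (fun x => ∑ S : {S : Finset (Fin K) // S.card = d u}, ((x ⟨u, S⟩ : ℕ) : ℝ))
        ((Finset.univ.filter fun k : Fin K => (k : ℕ) < ℓ).erase k)
        = tSL K N d p lamr μr u (ℓ - 1) := by
    intro k hk
    apply hetSym K N d p lamr μr hμ _ (fun π x => nu_comp K N d π u x)
    rw [Finset.card_erase_of_mem hk, Ls_card ℓ h2, Ls_card (ℓ - 1) (by omega)]
  rw [Finset.sum_congr rfl (fun k hk => by rw [herase k hk])] at hM
  rw [Finset.sum_const, Ls_card ℓ h2, nsmul_eq_mul, rate_sum K N d p lamr _,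
    rate_sum_u K N d p lamr u _, Ls_card ℓ h2] at hM
  have hLam : (∑ v, (K : ℝ) * lamr * p v / (K.choose (d v) : ℝ) * ((ℓ : ℕ).choose (d v) : ℝ))
      = lamr * ℓ * sigf K N d p ℓ := by
    rw [sigf, Finset.mul_sum]
    apply Finset.sum_congr rfl
    intro v _
    have hr := ratio_id K ℓ (d v) (hd1 v) (hdK v) h1
    linear_combination (lamr * p v) * hr
  have hLamw : (K : ℝ) * lamr * p u / (K.choose (d u) : ℝ) * ((ℓ : ℕ).choose (d u) : ℝ)
      = lamr * ℓ * quf K N d p u ℓ := by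
    rw [quf]
    have hr := ratio_id K ℓ (d u) (hd1 u) (hdK u) h1
    linear_combination (lamr * p u) * hr
  rw [hLam, hLamw] at hM
  have hfoldT : SLf μr (fun c : HetCls K N d => c.2.1) (hetRate K N d p lamr)
      (fun x => ∑ S : {S : Finset (Fin K) // S.card = d u}, ((x ⟨u, S⟩ : ℕ) : ℝ))
      (Finset.univ.filter fun k : Fin K => (k : ℕ) < ℓ) = tSL K N d p lamr μr u ℓ := rfl
  have hfoldG : SLf μr (fun c : HetCls K N d => c.2.1) (hetRate K N d p lamr) (fun _ => 1)
      (Finset.univ.filter fun k : Fin K => (k : ℕ) < ℓ) = gSL K N d p lamr μr ℓ := rfl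
  rw [hfoldT, hfoldG] at hM
  have hℓ0 : ((ℓ : ℕ) : ℝ) ≠ 0 := Nat.cast_ne_zero.mpr (by omega)
  have hM' : μr * (tSL K N d p lamr μr u ℓ - tSL K N d p lamr μr u (ℓ - 1))
      = lamr * sigf K N d p ℓ * tSL K N d p lamr μr u ℓ
        + lamr * quf K N d p u ℓ * gSL K N d p lamr μr ℓ := by
    apply mul_left_cancel₀ hℓ0
    linear_combination hM
  field_simp [hμ.ne']
  linear_combination hM'

end Rec


/-- In the randomized pool with heterogeneous degrees, if `G(λ) < ∞`
and the series `∑_x (∑_S x_{(u,S)}) Φ(x) λ^x` converges, then the mean number of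
type-`u` jobs is `L_u = ∑_{ℓ=d_u}^K ρ_{u|ℓ}/(1 − ρ_{u|ℓ})`. -/
theorem heterogeneous_degrees_randomized_pool_mean_jobs_per_type
    (K N : ℕ) (hK : 1 ≤ K) (hN : 1 ≤ N)
    (d : Fin N → ℕ) (hd1 : ∀ u, 1 ≤ d u) (hdK : ∀ u, d u ≤ K)
    (lam μ : ℝ) (hlam : 0 < lam) (hμ : 0 < μ)
    (p : Fin N → ℝ) (hp : ∀ u, 0 ≤ p u) (hp1 : ∑ u, p u = 1)
    (u : Fin N)
    (hG : Summable (fun x : HetCls K N d → ℕ =>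
      Phi (fun _ : Fin K => μ) (fun c => c.2.1) x *
        ∏ c, hetRate K N d p lam c ^ x c))
    (hLu : Summable (fun x : HetCls K N d → ℕ =>
      (∑ S : {S : Finset (Fin K) // S.card = d u}, (x ⟨u, S⟩ : ℝ)) *
        (Phi (fun _ : Fin K => μ) (fun c => c.2.1) x *
          ∏ c, hetRate K N d p lam c ^ x c))) :
    (Gf (fun _ : Fin K => μ) (fun c : HetCls K N d => c.2.1)
        (hetRate K N d p lam))⁻¹ *
      (∑' x : HetCls K N d → ℕ,
        (∑ S : {S : Finset (Fin K) // S.card = d u}, (x ⟨u, S⟩ : ℝ)) *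
          (Phi (fun _ : Fin K => μ) (fun c => c.2.1) x *
            ∏ c, hetRate K N d p lam c ^ x c)) =
      ∑ ℓ ∈ Finset.Icc (d u) K,
        hetTypeLoad K N d p lam μ u ℓ / (1 - hetTypeLoad K N d p lam μ u ℓ) := by
  classical
  have hlam0 : 0 ≤ lam := hlam.le
  have hsumG : Summable (fun x : HetCls K N d → ℕ =>
      PPf μ (fun c : HetCls K N d => c.2.1) (hetRate K N d p lam) x) := hG
  have hsumV : Summable (fun x : HetCls K N d → ℕ =>
      (∑ S : {S : Finset (Fin K) // S.card = d u}, ((x ⟨u, S⟩ : ℕ) : ℝ))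
        * PPf μ (fun c : HetCls K N d => c.2.1) (hetRate K N d p lam) x) := hLu
  have hge1 := gSL_ge_one K N d p lam μ hμ hlam0 hp hsumG
  have hpos : ∀ m, 1 ≤ m → m ≤ K → 0 < 1 - lam / μ * sigf K N d p m := by
    intro m hm1 hm2
    have hrec := gSL_rec K N d p lam μ hμ hlam0 hd1 hdK hp hsumG m hm1 hm2
    have h1 := hge1 m
    have h2 := hge1 (m - 1)
    nlinarith
  have key : ∀ ℓ, ℓ ≤ K → tSL K N d p lam μ u ℓ
      = gSL K N d p lam μ ℓ * ∑ m ∈ Finset.Icc 1 ℓ,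
          lam / μ * quf K N d p u m / (1 - lam / μ * sigf K N d p m) := by
    intro ℓ
    induction ℓ with
    | zero =>
      intro _
      rw [tSL_zero K N d p lam μ u hd1,
        show Finset.Icc 1 0 = ∅ from Finset.Icc_eq_empty (by omega)]
      simp
    | succ n ih =>
      intro hn1
      have hn : n ≤ K := by omega
      have hrecg := gSL_rec K N d p lam μ hμ hlam0 hd1 hdK hp hsumG (n+1) (by omega) hn1
      have hrect := tSL_rec K N d p lam μ u hμ hlam0 hd1 hdK hp hsumG hsumV (n+1) (by omega) hn1
      simp only [Nat.add_sub_cancel] at hrecg hrect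
      have hD := hpos (n+1) (by omega) hn1
      rw [Finset.sum_Icc_succ_top (by omega : 1 ≤ n+1)]
      have hD2 : 0 < μ - lam * sigf K N d p (n+1) := by
        have e : μ * (1 - lam / μ * sigf K N d p (n+1))
            = μ - lam * sigf K N d p (n+1) := by
          field_simp
        nlinarith [mul_pos hμ hD]
      apply mul_right_cancel₀ hD.ne'
      rw [hrect, ih hn, ← hrecg]
      field_simp [hD2.ne']
  have hGfold : Gf (fun _ : Fin K => μ) (fun c : HetCls K N d => c.2.1) (hetRate K N d p lam)
      = gSL K N d p lam μ K := by
    rw [gSL, Ls_top, SLf_univ_eq, Gf]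
    apply tsum_congr
    intro x
    rw [one_mul, PPf]
  have hTfold : (∑' x : HetCls K N d → ℕ,
      (∑ S : {S : Finset (Fin K) // S.card = d u}, (x ⟨u, S⟩ : ℝ)) *
        (Phi (fun _ : Fin K => μ) (fun c => c.2.1) x *
          ∏ c, hetRate K N d p lam c ^ x c))
      = tSL K N d p lam μ u K := by
    rw [tSL, Ls_top, SLf_univ_eq]
    apply tsum_congr
    intro x
    rw [PPf]
  rw [hGfold, hTfold, key K le_rfl]
  have hgK : gSL K N d p lam μ K ≠ 0 := by
    have := hge1 K
    linarith
  rw [inv_mul_cancel_left₀ hgK]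
  have hsub : Finset.Icc (d u) K ⊆ Finset.Icc 1 K := Finset.Icc_subset_Icc (hd1 u) le_rfl
  have hvan : ∀ m ∈ Finset.Icc 1 K, m ∉ Finset.Icc (d u) K →
      lam / μ * quf K N d p u m / (1 - lam / μ * sigf K N d p m) = 0 := by
    intro m hm hnm
    rw [Finset.mem_Icc] at hm
    have hlt : m < d u := by
      by_contra hcon
      exact hnm (Finset.mem_Icc.mpr ⟨by omega, hm.2⟩)
    have hch : (m - 1).choose (d u - 1) = 0 := Nat.choose_eq_zero_of_lt (by omega)
    rw [quf, hch]
    simp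
  rw [← Finset.sum_subset hsub hvan]
  apply Finset.sum_congr rfl
  intro m hm
  rw [Finset.mem_Icc] at hm
  have hm1 : 1 ≤ m := le_trans (hd1 u) hm.1
  have hD := hpos m hm1 hm.2
  rw [hetTypeLoad, quf]
  set c1 : ℝ := (((m - 1).choose (d u - 1) : ℕ) : ℝ) with hc1
  set c2 : ℝ := (((K - 1).choose (d u - 1) : ℕ) : ℝ) with hc2
  set S1 : ℝ := ∑ v ∈ Finset.univ.erase u,
    p v * ((m - 1).choose (d v - 1) : ℝ) / ((K - 1).choose (d v - 1) : ℝ) with hS1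
  have hsplit : sigf K N d p m = p u * c1 / c2 + S1 := by
    rw [sigf, ← Finset.sum_erase_add Finset.univ _ (Finset.mem_univ u)]
    ring
  rw [hsplit] at hD ⊢
  have hA0 : 0 ≤ lam / μ * (p u * c1 / c2) :=
    mul_nonneg (div_nonneg hlam0 hμ.le)
      (div_nonneg (mul_nonneg (hp u) (Nat.cast_nonneg _)) (Nat.cast_nonneg _))
  have h1B : 0 < 1 - lam / μ * S1 := by
    have e : 1 - lam / μ * S1
        = (1 - lam / μ * (p u * c1 / c2 + S1)) + lam / μ * (p u * c1 / c2) := by ring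
    rw [e]
    linarith
  have h1mX : 1 - lam / μ * p u * c1 / c2 / (1 - lam / μ * S1)
      = (1 - lam / μ * (p u * c1 / c2 + S1)) / (1 - lam / μ * S1) := by
    rw [eq_div_iff h1B.ne', sub_mul, one_mul, div_mul_cancel₀ _ h1B.ne']
    ring
  rw [h1mX, div_div_eq_mul_div, div_mul_cancel₀ _ h1B.ne']
  congr 1
  ring
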